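/- Let k > k' ≥ 1 be integers. Suppose a finite set Q has a partition Q = A₁ ∪ … ∪ A_k into subsets of equal size a, and let B₁, …, B_{k'} be pairwise disjoint subsets of Q of equal size b ≥ a. Then there exist indices t₁, …, t_m with m ≥ k'/3, and integers 0 = h₀ < h₁ < … < h_m ≤ k, such that |B_{t_j} ∩ (⋃_{h_{j-1} < i ≤ h_j} A_i)| ≥ b/k' for all j ∈ {1, …, m}. -/

import Mathlib

set_option linter.unusedSectionVars false
open Finset

section PartitionAux

variable {Q : Type*} [Fintype Q] [DecidableEq Q] {k k' a b : ℕ}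

/-- The union of the first `p` blocks. -/
def prefSet (A : Fin k → Finset Q) (p : ℕ) : Finset Q :=
  (Finset.univ.filter fun i : Fin k => i.val < p).biUnion A

/-- Number of elements of `B t` in the first `p` blocks. -/
def cnt (A : Fin k → Finset Q) (B : Fin k' → Finset Q) (t : Fin k') (p : ℕ) : ℕ :=
  (B t ∩ prefSet A p).card

lemma prefSet_mono (A : Fin k → Finset Q) {p q : ℕ} (hpq : p ≤ q) :
    prefSet A p ⊆ prefSet A q := by
  intro x hx
  simp only [prefSet, mem_biUnion, mem_filter, mem_univ, true_and] at hx ⊢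
  obtain ⟨i, hi, hx⟩ := hx
  exact ⟨i, by omega, hx⟩

lemma cnt_mono (A : Fin k → Finset Q) (B : Fin k' → Finset Q) (t : Fin k') {p q : ℕ}
    (hpq : p ≤ q) : cnt A B t p ≤ cnt A B t q := by
  apply Finset.card_le_card
  intro x hx
  rw [Finset.mem_inter] at hx ⊢
  exact ⟨hx.1, prefSet_mono A hpq hx.2⟩

lemma window_card (A : Fin k → Finset Q) (B : Fin k' → Finset Q)
    (hAdisj : ∀ i j, i ≠ j → Disjoint (A i) (A j))
    (t : Fin k') {p q : ℕ} (hpq : p ≤ q) :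
    (B t ∩ (Finset.univ.filter fun i : Fin k => p ≤ i.val ∧ i.val < q).biUnion A).card
      = cnt A B t q - cnt A B t p := by
  set W := (Finset.univ.filter fun i : Fin k => p ≤ i.val ∧ i.val < q).biUnion A with hW
  have hunion : B t ∩ prefSet A q = (B t ∩ prefSet A p) ∪ (B t ∩ W) := by
    ext x
    simp only [hW, prefSet, Finset.mem_inter, Finset.mem_biUnion, Finset.mem_filter,
      Finset.mem_union, Finset.mem_univ, true_and]
    constructor
    · rintro ⟨hB, i, hi, hx⟩
      rcases lt_or_ge i.val p with h' | h'
      · exact Or.inl ⟨hB, i, h', hx⟩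
      · exact Or.inr ⟨hB, i, ⟨h', hi⟩, hx⟩
    · rintro (⟨hB, i, hi, hx⟩ | ⟨hB, i, ⟨_, hi2⟩, hx⟩)
      · exact ⟨hB, i, by omega, hx⟩
      · exact ⟨hB, i, hi2, hx⟩
  have hdisj : Disjoint (B t ∩ prefSet A p) (B t ∩ W) := by
    rw [Finset.disjoint_left]
    rintro x hx hx'
    simp only [hW, prefSet, Finset.mem_inter, Finset.mem_biUnion, Finset.mem_filter,
      Finset.mem_univ, true_and] at hx hx'
    obtain ⟨-, i, hi, hxi⟩ := hx
    obtain ⟨-, i', hi', hxi'⟩ := hx'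
    have hne : i ≠ i' := by
      intro e
      have := congrArg Fin.val e
      omega
    exact Finset.disjoint_left.mp (hAdisj i i' hne) hxi hxi'
  have hcard : cnt A B t q = cnt A B t p + (B t ∩ W).card := by
    rw [cnt, hunion, Finset.card_union_of_disjoint hdisj]; rfl
  have := cnt_mono A B t hpq
  omega

lemma sum_inter_card_le (B : Fin k' → Finset Q)
    (hBdisj : ∀ i j, i ≠ j → Disjoint (B i) (B j))
    (S : Finset (Fin k')) (X : Finset Q) :
    ∑ x ∈ S, (B x ∩ X).card ≤ X.card := by
  rw [← Finset.card_biUnion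
    (fun i _ j _ hij => (hBdisj i j hij).mono Finset.inter_subset_left Finset.inter_subset_left)]
  exact Finset.card_le_card (Finset.biUnion_subset.mpr fun x _ => Finset.inter_subset_right)

end PartitionAux

open Finset in
lemma greedy_base {Q : Type*} [Fintype Q] [DecidableEq Q] {k k' a b : ℕ}
    (A : Fin k → Finset Q) (B : Fin k' → Finset Q)
    (p : ℕ) (U : Finset (Fin k')) (hpk : p ≤ k)
    (hstuck : ∀ x ∉ U, k' * (cnt A B x k - cnt A B x p) ≤ b - 1) :
    ∃ (m : ℕ) (t : Fin m → Fin k') (h : Fin (m+1) → ℕ),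
      Function.Injective t ∧ (∀ j, t j ∉ U) ∧ StrictMono h ∧ h 0 = p ∧
      h (Fin.last m) ≤ k ∧
      (∀ j : Fin m, b ≤ k' * (cnt A B (t j) (h j.succ) - cnt A B (t j) (h j.castSucc))) ∧
      k' * ∑ x ∈ (Finset.univ \ U) \ Finset.image t Finset.univ, (cnt A B x k - cnt A B x p)
        ≤ m * (((Finset.univ \ U) \ Finset.image t Finset.univ).card * (b-1) + k' * a)
          + ((Finset.univ \ U) \ Finset.image t Finset.univ).card * (b-1) := by
  refine ⟨0, Fin.elim0, fun _ => p, fun x => x.elim0, fun j => j.elim0,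
    fun i j hij => absurd (Fin.ext (by omega : i.val = j.val)) (ne_of_lt hij), rfl, hpk,
    fun j => j.elim0, ?_⟩
  have himg : Finset.image (Fin.elim0 : Fin 0 → Fin k') Finset.univ = ∅ := by
    simp
  rw [himg, Finset.sdiff_empty, zero_mul, zero_add, Finset.mul_sum]
  calc ∑ x ∈ Finset.univ \ U, k' * (cnt A B x k - cnt A B x p)
      ≤ ∑ _x ∈ Finset.univ \ U, (b - 1) := by
        refine Finset.sum_le_sum fun x hx => ?_
        exact hstuck x (by simpa using (Finset.mem_sdiff.mp hx).2)
    _ = (Finset.univ \ U).card * (b - 1) := by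
        rw [Finset.sum_const, smul_eq_mul]

open Finset in
lemma greedy_aux {Q : Type*} [Fintype Q] [DecidableEq Q] {k k' a b : ℕ}
    (A : Fin k → Finset Q) (B : Fin k' → Finset Q)
    (hAdisj : ∀ i j, i ≠ j → Disjoint (A i) (A j))
    (hAsize : ∀ i, (A i).card = a)
    (hBdisj : ∀ i j, i ≠ j → Disjoint (B i) (B j))
    (hb : 1 ≤ b) :
    ∀ (n p : ℕ) (U : Finset (Fin k')), p ≤ k → k ≤ p + n →
    ∃ (m : ℕ) (t : Fin m → Fin k') (h : Fin (m+1) → ℕ),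
      Function.Injective t ∧ (∀ j, t j ∉ U) ∧ StrictMono h ∧ h 0 = p ∧
      h (Fin.last m) ≤ k ∧
      (∀ j : Fin m, b ≤ k' * (cnt A B (t j) (h j.succ) - cnt A B (t j) (h j.castSucc))) ∧
      k' * ∑ x ∈ (Finset.univ \ U) \ Finset.image t Finset.univ, (cnt A B x k - cnt A B x p)
        ≤ m * (((Finset.univ \ U) \ Finset.image t Finset.univ).card * (b-1) + k' * a)
          + ((Finset.univ \ U) \ Finset.image t Finset.univ).card * (b-1) := by
  classical
  intro n
  induction n with
  | zero =>
    intro p U hpk hkp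
    refine greedy_base A B p U hpk fun x _ => ?_
    have h1 : cnt A B x k ≤ cnt A B x p := cnt_mono A B x hkp
    have h0 : cnt A B x k - cnt A B x p = 0 := by omega
    rw [h0, Nat.mul_zero]
    omega
  | succ n ih =>
    intro p U hpk hkp
    by_cases hex : ∃ q, p < q ∧ q ≤ k ∧ ∃ t, t ∉ U ∧ b ≤ k' * (cnt A B t q - cnt A B t p)
    · -- greedy step
      obtain ⟨hpq, hqk, t₀, ht₀U, ht₀gain⟩ := Nat.find_spec hex
      set q := Nat.find hex with hqdef
      -- minimality of q
      have hmin : ∀ x ∉ U, k' * (cnt A B x (q - 1) - cnt A B x p) ≤ b - 1 := by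
        intro x hxU
        rcases Nat.lt_or_ge p (q - 1) with hlt | hge
        · have hnot : ¬ (p < q - 1 ∧ q - 1 ≤ k ∧
              ∃ t, t ∉ U ∧ b ≤ k' * (cnt A B t (q - 1) - cnt A B t p)) :=
            Nat.find_min hex (by omega)
          push_neg at hnot
          have := hnot hlt (by omega) x hxU
          omega
        · have h1 : cnt A B x (q - 1) ≤ cnt A B x p := cnt_mono A B x hge
          have h0 : cnt A B x (q - 1) - cnt A B x p = 0 := by omega
          rw [h0, Nat.mul_zero]
          omega
      -- recursive call
      obtain ⟨m', t', h', inj', hU', mono', h0', hlast', win', inv'⟩ :=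
        ih q (insert t₀ U) hqk (by omega)
      refine ⟨m' + 1, Fin.cons t₀ t', Fin.cons p h', ?_, ?_, ?_, ?_, ?_, ?_, ?_⟩
      · rw [Fin.cons_injective_iff]
        refine ⟨?_, inj'⟩
        rintro ⟨j, hj⟩
        exact hU' j (by simp [hj])
      · intro j
        refine Fin.cases ht₀U (fun i => ?_) j
        rw [Fin.cons_succ]
        intro hmem
        exact hU' i (Finset.mem_insert_of_mem hmem)
      · rw [Fin.strictMono_iff_lt_succ]
        intro i
        rw [Fin.cons_succ]
        refine Fin.cases ?_ (fun j => ?_) i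
        · rw [Fin.castSucc_zero, Fin.cons_zero, h0']
          exact hpq
        · rw [← Fin.succ_castSucc, Fin.cons_succ]
          exact mono' (Fin.castSucc_lt_succ (i := j))
      · simp
      · rw [show Fin.last (m' + 1) = (Fin.last m').succ from rfl, Fin.cons_succ]
        exact hlast'
      · intro j
        rw [Fin.cons_succ]
        refine Fin.cases ?_ (fun i => ?_) j
        · simp only [Fin.cons_zero, Fin.castSucc_zero, h0']
          exact ht₀gain
        · rw [Fin.cons_succ, ← Fin.succ_castSucc, Fin.cons_succ]
          exact win' i
      · -- invariant
        have hS : (Finset.univ \ U) \ Finset.image (Fin.cons t₀ t') Finset.univ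
            = (Finset.univ \ insert t₀ U) \ Finset.image t' Finset.univ := by
          ext x
          simp only [Finset.mem_sdiff, Finset.mem_univ, true_and, Finset.mem_image,
            Finset.mem_insert, not_or, not_exists]
          constructor
          · rintro ⟨hxU, hximg⟩
            refine ⟨⟨fun e => hximg 0 (by simp [e]), hxU⟩, fun i => ?_⟩
            have := hximg i.succ
            rwa [Fin.cons_succ] at this
          · rintro ⟨⟨hxt₀, hxU⟩, hximg⟩
            refine ⟨hxU, fun j => ?_⟩
            refine Fin.cases ?_ (fun i => ?_) j
            · simpa using fun e => hxt₀ e.symm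
            · rw [Fin.cons_succ]; exact hximg i
        rw [hS]
        set S := (Finset.univ \ insert t₀ U) \ Finset.image t' Finset.univ with hSdef
        have hq1 : p ≤ q - 1 := by omega
        have hwin : k' * ∑ x ∈ S, (cnt A B x q - cnt A B x p) ≤ S.card * (b - 1) + k' * a := by
          have hsplit : ∀ x ∈ S, cnt A B x q - cnt A B x p
              = (cnt A B x q - cnt A B x (q-1)) + (cnt A B x (q-1) - cnt A B x p) := by
            intro x _
            have h1 := cnt_mono A B x hq1
            have h2 := cnt_mono A B x (Nat.sub_le q 1)
            omega
          rw [Finset.sum_congr rfl hsplit, Finset.sum_add_distrib, Nat.mul_add]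
          have hblock : ∑ x ∈ S, (cnt A B x q - cnt A B x (q-1)) ≤ a := by
            have heq : ∀ x ∈ S, cnt A B x q - cnt A B x (q-1)
                = (B x ∩ (Finset.univ.filter fun i : Fin k =>
                    q - 1 ≤ i.val ∧ i.val < q).biUnion A).card := by
              intro x _
              exact (window_card A B hAdisj x (Nat.sub_le q 1)).symm
            rw [Finset.sum_congr rfl heq]
            refine le_trans (sum_inter_card_le B hBdisj S _) ?_
            have hfilter : (Finset.univ.filter fun i : Fin k =>
                q - 1 ≤ i.val ∧ i.val < q) = {(⟨q - 1, by omega⟩ : Fin k)} := by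
              ext i
              simp only [Finset.mem_filter, Finset.mem_univ, true_and,
                Finset.mem_singleton, Fin.ext_iff]
              omega
            rw [hfilter, Finset.singleton_biUnion, hAsize]
          have hold : k' * ∑ x ∈ S, (cnt A B x (q-1) - cnt A B x p) ≤ S.card * (b - 1) := by
            rw [Finset.mul_sum]
            calc ∑ x ∈ S, k' * (cnt A B x (q-1) - cnt A B x p)
                ≤ ∑ _x ∈ S, (b - 1) := by
                  refine Finset.sum_le_sum fun x hx => ?_
                  have hxU : x ∉ U := by
                    have := (Finset.mem_sdiff.mp ((Finset.mem_sdiff.mp hx).1)).2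
                    simp only [Finset.mem_insert, not_or] at this
                    exact this.2
                  exact hmin x hxU
              _ = S.card * (b - 1) := by rw [Finset.sum_const, smul_eq_mul]
          calc k' * ∑ x ∈ S, (cnt A B x q - cnt A B x (q-1))
                + k' * ∑ x ∈ S, (cnt A B x (q-1) - cnt A B x p)
              ≤ k' * a + S.card * (b - 1) :=
                Nat.add_le_add (Nat.mul_le_mul_left k' hblock) hold
            _ = S.card * (b - 1) + k' * a := by ring
        have hsplit2 : ∀ x ∈ S, cnt A B x k - cnt A B x p
            = (cnt A B x k - cnt A B x q) + (cnt A B x q - cnt A B x p) := by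
          intro x _
          have h1 := cnt_mono A B x hpq.le
          have h2 := cnt_mono A B x hqk
          omega
        rw [Finset.sum_congr rfl hsplit2, Finset.sum_add_distrib, Nat.mul_add]
        calc k' * ∑ x ∈ S, (cnt A B x k - cnt A B x q)
              + k' * ∑ x ∈ S, (cnt A B x q - cnt A B x p)
            ≤ (m' * (S.card * (b-1) + k' * a) + S.card * (b-1))
              + (S.card * (b - 1) + k' * a) := Nat.add_le_add inv' hwin
          _ = (m' + 1) * (S.card * (b-1) + k' * a) + S.card * (b-1) := by ring
    · -- stuck
      refine greedy_base A B p U hpk fun x hxU => ?_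
      rcases Nat.lt_or_ge p k with hpk' | hpk'
      · by_contra hgt
        exact hex ⟨k, hpk', le_rfl, x, hxU, by omega⟩
      · have h1 : cnt A B x k ≤ cnt A B x p := cnt_mono A B x hpk'
        have h0 : cnt A B x k - cnt A B x p = 0 := by omega
        rw [h0, Nat.mul_zero]
        omega

/-- Lemma 3.3: given a partition of `Q` into `k` sets of size `a` and `k'` disjoint sets
`B₁, …, B_{k'}` of size `b ≥ a`, there are `m ≥ k'/3` distinct indices `t₁, …, t_m` and
thresholds `0 = h₀ < ⋯ < h_m ≤ k` with `|B_{t_j} ∩ (⋃_{h_{j-1} < i ≤ h_j} A_i)| ≥ b/k'`. -/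
theorem partition_lemma {Q : Type*} [Fintype Q] [DecidableEq Q] (k k' a b : ℕ)
    (hk' : 1 ≤ k') (hkk : k' < k)
    (A : Fin k → Finset Q)
    (hAdisj : ∀ i j, i ≠ j → Disjoint (A i) (A j))
    (hAcover : Finset.univ.biUnion A = Finset.univ)
    (hAsize : ∀ i, (A i).card = a)
    (B : Fin k' → Finset Q)
    (hBdisj : ∀ i j, i ≠ j → Disjoint (B i) (B j))
    (hBsize : ∀ i, (B i).card = b) (hba : a ≤ b) :
    ∃ m : ℕ, (k' : ℝ) / 3 ≤ m ∧
      ∃ t : Fin m → Fin k', Function.Injective t ∧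
        ∃ h : Fin (m + 1) → ℕ, StrictMono h ∧ h 0 = 0 ∧ h (Fin.last m) ≤ k ∧
          ∀ j : Fin m, (b : ℝ) / k' ≤
            ((B (t j) ∩ (Finset.univ.filter fun i : Fin k =>
              h j.castSucc ≤ i.val ∧ i.val < h j.succ).biUnion A).card : ℝ) := by
  classical
  rcases Nat.eq_zero_or_pos b with hb0 | hb
  · -- trivial case b = 0
    refine ⟨k', div_le_self (by positivity) (by norm_num), id, Function.injective_id,
      Fin.val, fun _ _ hij => hij, rfl, (Fin.val_last k').le.trans hkk.le, fun j => ?_⟩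
    rw [hb0]
    simp
  · -- main case
    obtain ⟨m, t, h, inj, _, mono, h0, hlast, win, inv⟩ :=
      greedy_aux A B hAdisj hAsize hBdisj hb k 0 ∅ (Nat.zero_le k) (by omega)
    -- basic computations
    have hck : ∀ x, cnt A B x k = b := by
      intro x
      have hpk : prefSet A k = Finset.univ := by
        rw [prefSet]
        rw [Finset.filter_true_of_mem fun i _ => i.isLt, hAcover]
      rw [cnt, hpk, Finset.inter_univ, hBsize]
    have hc0 : ∀ x, cnt A B x 0 = 0 := by
      intro x
      simp [cnt, prefSet]
    rw [Finset.sdiff_empty] at inv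
    have hm : m ≤ k' := by
      have := Fintype.card_le_of_injective t inj
      simpa using this
    have hScard : ((Finset.univ : Finset (Fin k')) \ Finset.image t Finset.univ).card
        = k' - m := by
      rw [Finset.card_sdiff_of_subset (Finset.subset_univ _), Finset.card_univ,
        Finset.card_image_of_injective _ inj, Finset.card_univ]
      simp
    have hsum : ∑ x ∈ (Finset.univ : Finset (Fin k')) \ Finset.image t Finset.univ,
        (cnt A B x k - cnt A B x 0) = (k' - m) * b := by
      rw [Finset.sum_congr rfl fun x _ => by rw [hck, hc0]]
      rw [Finset.sum_const, smul_eq_mul, hScard]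
      simp
    rw [hsum, hScard] at inv
    -- derive k' ≤ 3 m
    have h3m : k' ≤ 3 * m := by
      by_contra h3
      push_neg at h3
      obtain ⟨b1, rfl⟩ : ∃ b1, b = b1 + 1 := ⟨b - 1, by omega⟩
      have hr : k' - m = (k' - m) := rfl
      set r := k' - m with hrdef
      have hkmr : k' = m + r := by omega
      have hr2 : 2 * m + 1 ≤ r := by omega
      rw [hkmr] at inv
      simp only [Nat.add_sub_cancel] at inv
      have hmr : m ≤ r := by omega
      have h1 : m * ((m + r) * a) ≤ m * ((m + r) * (b1 + 1)) := by gcongr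
      have h2 : (2 * m + 1) * (r * (b1 + 1)) ≤ r * (r * (b1 + 1)) := by gcongr
      have h3 : m * m * b1 ≤ m * r * b1 := by gcongr
      have h4 : m * m ≤ m * r := by gcongr
      nlinarith [inv, h1, h2, h3, h4, hr2]
    refine ⟨m, ?_, t, inj, h, mono, h0, hlast, fun j => ?_⟩
    · rw [div_le_iff₀ (by norm_num : (0:ℝ) < 3)]
      exact_mod_cast (by omega : k' ≤ m * 3)
    · have hcard := window_card A B hAdisj (t j) (mono (Fin.castSucc_lt_succ (i := j))).le
      rw [hcard]
      rw [div_le_iff₀ (by exact_mod_cast hk' : (0:ℝ) < (k' : ℝ))]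
      have hw := win j
      rw [Nat.mul_comm] at hw
      exact_mod_cast hw
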